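/- If r > 0 and t₁,…,t₅ > 0 satisfy ∑ᵢ arctan(tᵢ/r) ∈ {π, 2π}, then x = r is a root of the biquadratic Sylvester equation s₁x⁴ − s₃x² + s₅ = 0, where sₖ is the k-th elementary symmetric polynomial in t₁,…,t₅. -/
import Mathlib

open Real

lemma key_decomp (r t : ℝ) (hr : 0 < r) :
    (r : ℂ) + t * Complex.I =
      (↑(r * Real.sqrt (1 + (t / r) ^ 2)) : ℂ) * Complex.exp (Real.arctan (t / r) * Complex.I) := by
  rw [Complex.exp_mul_I, ← Complex.ofReal_cos, ← Complex.ofReal_sin,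
    Real.cos_arctan, Real.sin_arctan]
  set s := Real.sqrt (1 + (t / r) ^ 2) with hsdef
  have hs : (0:ℝ) < s := by rw [hsdef]; positivity
  have h1 : (s : ℂ) ≠ 0 := by exact_mod_cast hs.ne'
  have h2 : (r : ℂ) ≠ 0 := by exact_mod_cast hr.ne'
  push_cast
  field_simp

/-- If r > 0 and t₁,…,t₅ > 0 satisfy ∑ arctan(tᵢ/r) ∈ {π, 2π}, then r is a root of the
biquadratic Sylvester equation s₁x⁴ − s₃x² + s₅ = 0. -/
theorem sylvester_equation_of_arctan_sum (t₁ t₂ t₃ t₄ t₅ r : ℝ)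
    (ht₁ : 0 < t₁) (ht₂ : 0 < t₂) (ht₃ : 0 < t₃) (ht₄ : 0 < t₄) (ht₅ : 0 < t₅) (hr : 0 < r)
    (hsum : arctan (t₁ / r) + arctan (t₂ / r) + arctan (t₃ / r) + arctan (t₄ / r) +
        arctan (t₅ / r) = π ∨
      arctan (t₁ / r) + arctan (t₂ / r) + arctan (t₃ / r) + arctan (t₄ / r) +
        arctan (t₅ / r) = 2 * π) :
    (t₁ + t₂ + t₃ + t₄ + t₅) * r ^ 4 -
      (t₁*t₂*t₃ + t₁*t₂*t₄ + t₁*t₂*t₅ + t₁*t₃*t₄ + t₁*t₃*t₅ + t₁*t₄*t₅ +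
        t₂*t₃*t₄ + t₂*t₃*t₅ + t₂*t₄*t₅ + t₃*t₄*t₅) * r ^ 2 +
      t₁*t₂*t₃*t₄*t₅ = 0 := by
  set z : ℝ → ℂ := fun t => (r : ℂ) + t * Complex.I with hz
  have him : (z t₁ * z t₂ * z t₃ * z t₄ * z t₅).im = 0 := by
    have e : ∀ t : ℝ, z t = (↑(r * Real.sqrt (1 + (t / r) ^ 2)) : ℂ) *
        Complex.exp (Real.arctan (t / r) * Complex.I) := fun t => key_decomp r t hr
    rw [e t₁, e t₂, e t₃, e t₄, e t₅]
    set a₁ := r * Real.sqrt (1 + (t₁ / r) ^ 2)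
    set a₂ := r * Real.sqrt (1 + (t₂ / r) ^ 2)
    set a₃ := r * Real.sqrt (1 + (t₃ / r) ^ 2)
    set a₄ := r * Real.sqrt (1 + (t₄ / r) ^ 2)
    set a₅ := r * Real.sqrt (1 + (t₅ / r) ^ 2)
    set S := arctan (t₁ / r) + arctan (t₂ / r) + arctan (t₃ / r) + arctan (t₄ / r) +
        arctan (t₅ / r) with hS
    have : (↑a₁ : ℂ) * Complex.exp (arctan (t₁ / r) * Complex.I) *
        ((↑a₂ : ℂ) * Complex.exp (arctan (t₂ / r) * Complex.I)) *
        ((↑a₃ : ℂ) * Complex.exp (arctan (t₃ / r) * Complex.I)) *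
        ((↑a₄ : ℂ) * Complex.exp (arctan (t₄ / r) * Complex.I)) *
        ((↑a₅ : ℂ) * Complex.exp (arctan (t₅ / r) * Complex.I)) =
        (↑(a₁ * a₂ * a₃ * a₄ * a₅) : ℂ) * Complex.exp ((S : ℝ) * Complex.I) := by
      rw [hS]
      push_cast
      rw [add_mul, add_mul, add_mul, add_mul, Complex.exp_add, Complex.exp_add,
        Complex.exp_add, Complex.exp_add]
      ring
    rw [this, Complex.exp_mul_I]
    have hsin : Real.sin S = 0 := by
      rcases hsum with h | h <;> rw [h] <;> simp [Real.sin_two_pi]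
    simp [Complex.mul_im, Complex.add_im, Complex.ofReal_re, Complex.ofReal_im,
      Complex.I_im, Complex.I_re, ← Complex.ofReal_cos, ← Complex.ofReal_sin, hsin]
  have expand : (z t₁ * z t₂ * z t₃ * z t₄ * z t₅).im =
      (t₁ + t₂ + t₃ + t₄ + t₅) * r ^ 4 -
      (t₁*t₂*t₃ + t₁*t₂*t₄ + t₁*t₂*t₅ + t₁*t₃*t₄ + t₁*t₃*t₅ + t₁*t₄*t₅ +
        t₂*t₃*t₄ + t₂*t₃*t₅ + t₂*t₄*t₅ + t₃*t₄*t₅) * r ^ 2 +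
      t₁*t₂*t₃*t₄*t₅ := by
    simp only [hz, Complex.add_re, Complex.add_im, Complex.mul_re, Complex.mul_im,
      Complex.ofReal_re, Complex.ofReal_im, Complex.I_re, Complex.I_im]
    ring
  rw [expand] at him
  exact him
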